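/- The function F(x, y, y1, y2, y3) = y3^(4/3), defined on the region y3 > 0 of the 5-dimensional jet space, satisfies both of Bryant's conditions: (C1) 4D²F₃ − 8DF₂ + 8F₁ − 6(DF₃)F₃ + 4F₂F₃ + F₃³ = 0 and (C2) 160D²F₂ − 640DF₁ + 144(DF₃)² − 352(DF₃)F₂ + 144F₂² − 80(DF₂)F₃ + 160F₁F₃ − 72(DF₃)F₃² + 88F₂F₃² + 9F₃⁴ + 16000F_y = 0. Hence the ODE y'''' = (y''')^(4/3) satisfies Bryant's contact-invariant conditions. -/

import Mathlib

/-- Coordinates on the 5-dimensional jet space `J` are `p 0 = x`, `p 1 = y`,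
`p 2 = y₁`, `p 3 = y₂`, `p 4 = y₃`.  `pder i G` is the partial derivative of a
function `G` on `J` with respect to the `i`-th coordinate. -/
noncomputable def pder (i : Fin 5) (G : (Fin 5 → ℝ) → ℝ) : (Fin 5 → ℝ) → ℝ :=
  fun p => deriv (fun t => G (Function.update p i t)) (p i)

/-- The total derivative `D = ∂ₓ + y₁∂_y + y₂∂_{y₁} + y₃∂_{y₂} + F ∂_{y₃}`
associated to the ODE `y'''' = F`, applied to a function `G` on the jet space. -/
noncomputable def Dtot (F G : (Fin 5 → ℝ) → ℝ) : (Fin 5 → ℝ) → ℝ :=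
  fun p => pder 0 G p + p 1 * pder 1 G p + p 2 * pder 2 G p
    + p 3 * pder 3 G p + F p * pder 4 G p

/-- Bryant's first contact-invariant condition
`4D²F₃ - 8DF₂ + 8F₁ - 6(DF₃)F₃ + 4F₂F₃ + F₃³ = 0` at the point `p`. -/
def BryantC1 (F : (Fin 5 → ℝ) → ℝ) (p : Fin 5 → ℝ) : Prop :=
  4 * Dtot F (Dtot F (pder 4 F)) p - 8 * Dtot F (pder 3 F) p + 8 * pder 2 F p
    - 6 * Dtot F (pder 4 F) p * pder 4 F p + 4 * pder 3 F p * pder 4 F p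
    + (pder 4 F p)^3 = 0

/-- Bryant's second contact-invariant condition at the point `p`. -/
def BryantC2 (F : (Fin 5 → ℝ) → ℝ) (p : Fin 5 → ℝ) : Prop :=
  160 * Dtot F (Dtot F (pder 3 F)) p - 640 * Dtot F (pder 2 F) p
    + 144 * (Dtot F (pder 4 F) p)^2 - 352 * Dtot F (pder 4 F) p * pder 3 F p
    + 144 * (pder 3 F p)^2 - 80 * Dtot F (pder 3 F) p * pder 4 F p
    + 160 * pder 2 F p * pder 4 F p - 72 * Dtot F (pder 4 F) p * (pder 4 F p)^2
    + 88 * pder 3 F p * (pder 4 F p)^2 + 9 * (pder 4 F p)^4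
    + 16000 * pder 1 F p = 0

/-- The ODE `y'''' = (y''')^(4/3)`, i.e. `F(x,y,y₁,y₂,y₃) = y₃^(4/3)`, satisfies
both of Bryant's contact-invariant conditions on the region `y₃ > 0`. -/
lemma pder_comp (f : ℝ → ℝ) (i : Fin 5) (hi : i ≠ 4) (p : Fin 5 → ℝ) :
    pder i (fun q => f (q 4)) p = 0 := by
  unfold pder
  have h : (fun t => f (Function.update p i t 4)) = fun _ => f (p 4) :=
    funext fun t => by rw [Function.update_of_ne (Ne.symm hi)]
  rw [h]; exact deriv_const _ _

lemma pder_comp4 (f : ℝ → ℝ) (p : Fin 5 → ℝ) :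
    pder 4 (fun q => f (q 4)) p = deriv f (p 4) := by
  unfold pder
  simp only [Function.update_self]

lemma Dtot_comp (F : (Fin 5 → ℝ) → ℝ) (f : ℝ → ℝ) (p : Fin 5 → ℝ) :
    Dtot F (fun q => f (q 4)) p = F p * deriv f (p 4) := by
  unfold Dtot
  rw [pder_comp f 0 (by decide), pder_comp f 1 (by decide), pder_comp f 2 (by decide),
    pder_comp f 3 (by decide), pder_comp4]
  ring

lemma Dtot_zero (F : (Fin 5 → ℝ) → ℝ) (p : Fin 5 → ℝ) :
    Dtot F (fun _ => (0:ℝ)) p = 0 := by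
  unfold Dtot pder
  simp

noncomputable def Fex : (Fin 5 → ℝ) → ℝ := fun q => q 4 ^ ((4 : ℝ)/3)
noncomputable def g1 : ℝ → ℝ := fun t => 4/3 * t ^ ((1:ℝ)/3)
noncomputable def hfun : ℝ → ℝ := fun s => s ^ ((4:ℝ)/3) * deriv g1 s

lemma Fex_pder4 : pder 4 Fex = fun q => g1 (q 4) := by
  funext q
  have h := pder_comp4 (fun t => t ^ ((4:ℝ)/3)) q
  have h2 : deriv (fun t : ℝ => t ^ ((4:ℝ)/3)) (q 4) = g1 (q 4) := by
    rw [Real.deriv_rpow_const]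
    unfold g1
    norm_num
  exact h.trans h2

lemma Fex_pder_zero (i : Fin 5) (hi : i ≠ 4) (p : Fin 5 → ℝ) : pder i Fex p = 0 :=
  pder_comp (fun t => t ^ ((4:ℝ)/3)) i hi p

lemma Fex_pder3 : pder 3 Fex = fun _ => (0:ℝ) :=
  funext fun p => Fex_pder_zero 3 (by decide) p

lemma Fex_pder2 : pder 2 Fex = fun _ => (0:ℝ) :=
  funext fun p => Fex_pder_zero 2 (by decide) p

lemma Fex_Dzero : Dtot Fex (fun _ => (0:ℝ)) = fun _ => (0:ℝ) :=
  funext fun p => Dtot_zero _ _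

lemma Fex_D_g1 : Dtot Fex (fun q => g1 (q 4)) = fun q => hfun (q 4) := by
  funext q
  rw [Dtot_comp]
  rfl

theorem bryant_example_rpow :
    ∀ p : Fin 5 → ℝ, 0 < p 4 →
      BryantC1 (fun q => q 4 ^ ((4 : ℝ)/3)) p ∧
      BryantC2 (fun q => q 4 ^ ((4 : ℝ)/3)) p := by
  intro p hp
  have hpne : p 4 ≠ 0 := hp.ne'
  -- derivative of g1 away from 0
  have hg1d : ∀ s : ℝ, s ≠ 0 → deriv g1 s = 4/9 * s ^ ((1:ℝ)/3 - 1) := by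
    intro s hs
    have h := ((Real.hasDerivAt_rpow_const (x := s) (p := (1:ℝ)/3) (Or.inl hs)).const_mul
      ((4:ℝ)/3)).deriv
    rw [show g1 = fun t : ℝ => (4:ℝ)/3 * t ^ ((1:ℝ)/3) from rfl, h]
    ring
  -- value of hfun on positives
  have hhval : ∀ s : ℝ, 0 < s → hfun s = 4/9 * s ^ ((2:ℝ)/3) := by
    intro s hs
    unfold hfun
    rw [hg1d s hs.ne',
      show s ^ ((4:ℝ)/3) * (4/9 * s ^ ((1:ℝ)/3 - 1))
        = 4/9 * (s ^ ((4:ℝ)/3) * s ^ ((1:ℝ)/3 - 1)) by ring,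
      ← Real.rpow_add hs]
    norm_num
  have hhev : hfun =ᶠ[nhds (p 4)] fun s => 4/9 * s ^ ((2:ℝ)/3) := by
    filter_upwards [Ioi_mem_nhds hp] with s hs using hhval s hs
  have hhd : deriv hfun (p 4) = 4/9 * ((2:ℝ)/3 * (p 4) ^ ((2:ℝ)/3 - 1)) := by
    rw [hhev.deriv_eq,
      ((Real.hasDerivAt_rpow_const (x := p 4) (p := (2:ℝ)/3) (Or.inl hpne)).const_mul
        ((4:ℝ)/9)).deriv]
  -- key pointwise values
  have hF3 : pder 4 Fex p = 4/3 * (p 4) ^ ((1:ℝ)/3) := by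
    rw [Fex_pder4]
    rfl
  have hDF3 : Dtot Fex (pder 4 Fex) p = 4/9 * (p 4) ^ ((2:ℝ)/3) := by
    rw [Fex_pder4, Fex_D_g1]
    exact hhval _ hp
  have hD2F3 : Dtot Fex (Dtot Fex (pder 4 Fex)) p
      = (p 4) ^ ((4:ℝ)/3) * (4/9 * ((2:ℝ)/3 * (p 4) ^ ((2:ℝ)/3 - 1))) := by
    rw [Fex_pder4, Fex_D_g1, Dtot_comp, hhd]
    rfl
  have hz3 : Dtot Fex (pder 3 Fex) p = 0 := by rw [Fex_pder3]; exact Dtot_zero _ _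
  have hz3' : Dtot Fex (Dtot Fex (pder 3 Fex)) p = 0 := by
    rw [Fex_pder3, Fex_Dzero]; exact Dtot_zero _ _
  have hz2 : Dtot Fex (pder 2 Fex) p = 0 := by rw [Fex_pder2]; exact Dtot_zero _ _
  have hp1 : pder 1 Fex p = 0 := Fex_pder_zero 1 (by decide) p
  have hp2 : pder 2 Fex p = 0 := Fex_pder_zero 2 (by decide) p
  have hp3 : pder 3 Fex p = 0 := Fex_pder_zero 3 (by decide) p
  -- algebraic identities
  set u := (p 4) ^ ((1:ℝ)/3) with hu
  have hu0 : u ≠ 0 := (Real.rpow_pos_of_pos hp _).ne'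
  have hA : (p 4) ^ ((4:ℝ)/3) = u ^ (4:ℕ) := by
    rw [hu, ← Real.rpow_natCast ((p 4) ^ ((1:ℝ)/3)) 4, ← Real.rpow_mul hp.le]
    norm_num
  have hB : (p 4) ^ ((2:ℝ)/3) = u ^ (2:ℕ) := by
    rw [hu, ← Real.rpow_natCast ((p 4) ^ ((1:ℝ)/3)) 2, ← Real.rpow_mul hp.le]
    norm_num
  have hC : (p 4) ^ ((2:ℝ)/3 - 1) = u⁻¹ := by
    rw [show (2:ℝ)/3 - 1 = -(1/3) by norm_num, Real.rpow_neg hp.le, hu]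
  constructor
  · show BryantC1 Fex p
    unfold BryantC1
    rw [hD2F3, hz3, hDF3, hp2, hp3, hF3, hA, hB, hC]
    field_simp
    ring
  · show BryantC2 Fex p
    unfold BryantC2
    rw [hz3', hz2, hDF3, hz3, hp1, hp2, hp3, hF3, hB]
    ring
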